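/- Theorem 5 (full separability criterion): Let ρ = Σᵢ pᵢ ρ₁ⁱ ⊗ ⋯ ⊗ ρ_nⁱ be a fully separable n-partite state (pᵢ ≥ 0, Σᵢpᵢ = 1, each ρ_jⁱ a pure state). Then for any 1 ≤ q ≤ n−1, nonnegative reals α_q,…,α_n, and natural number l: ‖MR^{l,q}_{α_q,…,α_n}(ρ)‖_tr ≤ Π_{k=q}^n √(lα_k²+1), where MR^{l,q}(ρ) = Σᵢ pᵢ ρ₁ⁱ ⊗ ⋯ ⊗ ρ_{q−1}ⁱ ⊗ M^l_{α_q,…,α_n}[ρ_qⁱ,…,ρ_nⁱ]. -/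

import Mathlib

open Matrix
open scoped ComplexOrder

/-- Column-stacking vectorization: `vec A (j, i) = A i j`. -/
def vec {m n : Type*} (A : Matrix m n ℂ) : n × m → ℂ := fun p => A p.2 p.1

/-- The trace norm `‖A‖_tr = tr √(Aᴴ A)`, i.e. the sum of singular values. -/
noncomputable def traceNorm {m n : Type*} [Fintype m] [Fintype n] [DecidableEq n]
    (A : Matrix m n ℂ) : ℝ :=
  (((Matrix.posSemidef_conjTranspose_mul_self A).1.eigenvectorUnitary : Matrix n n ℂ) *
    diagonal (((↑) : ℝ → ℂ) ∘ (Real.sqrt ·) ∘ (Matrix.posSemidef_conjTranspose_mul_self A).1.eigenvalues) *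
    (star ((Matrix.posSemidef_conjTranspose_mul_self A).1.eigenvectorUnitary : Matrix n n ℂ))).trace.re

/-- The column vector `(α E_{l×1} ; vec Y)`, as a function on
`Fin l ⊕ (indices of vec Y)`. -/
noncomputable def augVec {m : ℕ} (l : ℕ) (α : ℝ) (Y : Matrix (Fin m) (Fin m) ℂ) :
    Fin l ⊕ (Fin m × Fin m) → ℂ :=
  Sum.elim (fun _ => ((α : ℝ) : ℂ)) (fun ab => _root_.vec Y ab)

/-- The matrix `MR^{l,q}_{α_q,…,α_n}(ρ) = ∑ᵢ pᵢ ρ₁ⁱ ⊗ ⋯ ⊗ ρ_{q−1}ⁱ ⊗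
M^l_{α_q,…,α_n}[ρ_qⁱ, …, ρ_nⁱ]`, where
`M^l[Y_q,…,Y_n] = (α_q E_{l×1}; vec Y_q) ⊗ ⨂_{k>q} (α_k E_{1×l}, vec(Y_k)ᵀ)`. -/
noncomputable def MRmat (n l : ℕ) (dims : Fin n → ℕ) (q : Fin n)
    (α : Fin n → ℝ) {N : ℕ} (p : Fin N → ℝ)
    (σ : (i : Fin N) → (j : Fin n) → Matrix (Fin (dims j)) (Fin (dims j)) ℂ) :
    Matrix
      (((j : {j : Fin n // j < q}) → Fin (dims j.1)) ×
        (Fin l ⊕ (Fin (dims q) × Fin (dims q))))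
      (((j : {j : Fin n // j < q}) → Fin (dims j.1)) ×
        ((k : {k : Fin n // q < k}) → (Fin l ⊕ (Fin (dims k.1) × Fin (dims k.1)))))
      ℂ :=
  Matrix.of fun r c =>
    ∑ i, (p i : ℂ) * (∏ j : {j : Fin n // j < q}, σ i j.1 (r.1 j) (c.1 j)) *
      augVec l (α q) (σ i q) r.2 *
      ∏ k : {k : Fin n // q < k}, augVec l (α k.1) (σ i k.1) (c.2 k)


section auxiliary

noncomputable def psdSqrt {n : Type*} [Fintype n] [DecidableEq n] {H : Matrix n n ℂ}
    (hH : H.PosSemidef) : Matrix n n ℂ :=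
  (hH.1.eigenvectorUnitary : Matrix n n ℂ) *
    diagonal (((↑) : ℝ → ℂ) ∘ (Real.sqrt ·) ∘ hH.1.eigenvalues) *
    (star (hH.1.eigenvectorUnitary : Matrix n n ℂ))

lemma psdSqrt_posSemidef {n : Type*} [Fintype n] [DecidableEq n] {H : Matrix n n ℂ}
    (hH : H.PosSemidef) : (psdSqrt hH).PosSemidef := by
  unfold psdSqrt
  rw [Matrix.star_eq_conjTranspose]
  refine (posSemidef_diagonal_iff.mpr fun i => ?_).mul_mul_conjTranspose_same _
  simp only [Function.comp_apply]
  exact_mod_cast Real.sqrt_nonneg _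

lemma psdSqrt_mul_self {n : Type*} [Fintype n] [DecidableEq n] {H : Matrix n n ℂ}
    (hH : H.PosSemidef) : psdSqrt hH * psdSqrt hH = H := by
  have hsp : H = (hH.1.eigenvectorUnitary : Matrix n n ℂ) *
      diagonal (RCLike.ofReal ∘ hH.1.eigenvalues) *
      (star (hH.1.eigenvectorUnitary : Matrix n n ℂ)) := by
    have := hH.1.spectral_theorem
    rwa [Unitary.conjStarAlgAut_apply] at this
  have hWW : star (hH.1.eigenvectorUnitary : Matrix n n ℂ) *
      (hH.1.eigenvectorUnitary : Matrix n n ℂ) = 1 := Unitary.coe_star_mul_self _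
  conv_rhs => rw [hsp]
  unfold psdSqrt
  set W : Matrix n n ℂ := (hH.1.eigenvectorUnitary : Matrix n n ℂ)
  set D := diagonal (((↑) : ℝ → ℂ) ∘ (Real.sqrt ·) ∘ hH.1.eigenvalues)
  rw [show W * D * star W * (W * D * star W) = W * D * (star W * W) * D * star W by
    simp only [Matrix.mul_assoc], hWW, Matrix.mul_one, Matrix.mul_assoc W D D, diagonal_mul_diagonal]
  congr 3
  funext i
  simp only [Function.comp_apply]
  rw [← Complex.ofReal_mul, Real.mul_self_sqrt (hH.eigenvalues_nonneg i)]
  rfl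

lemma sum_pi_prod {J : Type*} [Fintype J] [DecidableEq J] {D : J → Type*}
    [∀ j, Fintype (D j)] {R : Type*} [CommSemiring R] (g : (j : J) → D j → R) :
    ∑ x : (j : J) → D j, ∏ j, g j (x j) = ∏ j, ∑ a, g j a := by
  rw [Finset.prod_univ_sum]
  exact Finset.sum_congr Fintype.piFinset_univ.symm fun _ _ => rfl

section core
variable {m t n : Type*} [Fintype m] [Fintype t] [Fintype n] [DecidableEq n]

lemma euclid_inner_mulVec (M : Matrix m t ℂ) (x : EuclideanSpace ℂ m) (v : EuclideanSpace ℂ t) :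
    (inner (𝕜 := ℂ) x (show EuclideanSpace ℂ m from WithLp.toLp 2 (M.mulVec v)))
      = inner (𝕜 := ℂ) (show EuclideanSpace ℂ t from WithLp.toLp 2 (Mᴴ.mulVec x)) v := by
  simp only [PiLp.inner_apply, RCLike.inner_apply, mulVec, dotProduct, conjTranspose_apply,
    map_sum, Finset.mul_sum, Finset.sum_mul]
  rw [Finset.sum_comm]
  refine Finset.sum_congr rfl fun i _ => Finset.sum_congr rfl fun j _ => by
    simp only [Complex.star_def, _root_.map_mul, Complex.conj_conj]; ring

end core

section core2
variable {m t n : Type*} [Fintype m] [Fintype t] [Fintype n] [DecidableEq n]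

lemma frobSq_eq {a b : Type*} [Fintype a] [Fintype b] (M : Matrix a b ℂ) :
    ∑ r, ∑ c, ‖M r c‖ ^ 2 = ((Mᴴ * M).trace).re := by
  have h1 : (Mᴴ * M).trace = ∑ c, ∑ r, (starRingEnd ℂ) (M r c) * M r c := by
    simp [Matrix.trace, Matrix.mul_apply, Matrix.diag, conjTranspose_apply]
  rw [h1, Complex.re_sum, Finset.sum_comm]
  refine Finset.sum_congr rfl fun r _ => ?_
  rw [Complex.re_sum]
  refine Finset.sum_congr rfl fun c _ => ?_
  rw [mul_comm, Complex.mul_conj]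
  simp [Complex.sq_norm]

lemma traceNorm_mul_le (U : Matrix m t ℂ) (V : Matrix t n ℂ) :
    traceNorm (U * V) ≤
      Real.sqrt (∑ r, ∑ c, ‖U r c‖ ^ 2) * Real.sqrt (∑ r, ∑ c, ‖V r c‖ ^ 2) := by
  classical
  set A := U * V with hA
  set hX := Matrix.posSemidef_conjTranspose_mul_self A with hXdef
  set S := psdSqrt hX with hSdef
  have hS : S.PosSemidef := psdSqrt_posSemidef hX
  have hSS : S * S = Aᴴ * A := psdSqrt_mul_self hX
  have hH : S.IsHermitian := hS.1
  set lam := hH.eigenvalues with hlam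
  have hlam0 : ∀ i, 0 ≤ lam i := hS.eigenvalues_nonneg
  set W : Matrix n n ℂ := (hH.eigenvectorUnitary : Matrix n n ℂ) with hWdef
  have hWW : star W * W = 1 := mem_unitaryGroup_iff'.mp hH.eigenvectorUnitary.2
  have hWW' : W * star W = 1 := mem_unitaryGroup_iff.mp hH.eigenvectorUnitary.2
  have hspec : S = W * diagonal (RCLike.ofReal ∘ lam) * star W := by
    have := hH.spectral_theorem
    rwa [Unitary.conjStarAlgAut_apply] at this
  -- step 1 : traceNorm A = ∑ lam
  have htrace : traceNorm A = ∑ i, lam i := by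
    have h1 : S.trace = ∑ i, (lam i : ℂ) := by
      rw [hspec, trace_mul_cycle, hWW, Matrix.one_mul, trace_diagonal]
      rfl
    show (S.trace).re = _
    rw [h1, Complex.re_sum]
    simp
  -- step 2 : B and its Gram matrix
  set B := A * W with hB
  have hdiag : star W * S * W = diagonal (RCLike.ofReal ∘ lam) :=
    by have := hH.conjStarAlgAut_star_eigenvectorUnitary
       rwa [Unitary.conjStarAlgAut_star_apply] at this
  have e1 : (star W * S * W) * (star W * S * W) = star W * (S * S) * W := by
    have h : (star W * S * W) * (star W * S * W)
        = star W * S * ((W * star W) * (S * W)) := by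
      simp only [Matrix.mul_assoc]
    rw [h, hWW', Matrix.one_mul]
    simp only [Matrix.mul_assoc]
  have e2 : Bᴴ * B = star W * (Aᴴ * A) * W := by
    rw [hB, conjTranspose_mul, Matrix.star_eq_conjTranspose]
    simp only [Matrix.mul_assoc]
  have hBB : Bᴴ * B = diagonal (fun i => (lam i : ℂ) * (lam i : ℂ)) := by
    rw [e2, ← hSS, ← e1, hdiag, diagonal_mul_diagonal]
    rfl
  -- step 3 : Euclidean vectors
  set b : n → EuclideanSpace ℂ m := fun i => WithLp.toLp 2 (fun r => B r i) with hb
  have hinner : ∀ i j, (inner ℂ (b i) (b j) : ℂ) = if i = j then (lam i : ℂ) * lam i else 0 := by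
    intro i j
    have h := congrFun (congrFun hBB i) j
    simp only [Matrix.mul_apply, conjTranspose_apply, diagonal_apply] at h
    simp [PiLp.inner_apply, RCLike.inner_apply, hb]
    rw [← h]
    exact Finset.sum_congr rfl fun _ _ => mul_comm _ _
  have hnormb : ∀ i, ‖b i‖ = lam i := by
    intro i
    have h1 : (inner ℂ (b i) (b i) : ℂ) = (lam i : ℂ) * lam i := by rw [hinner i i, if_pos rfl]
    have h2 := inner_self_eq_norm_sq (𝕜 := ℂ) (b i)
    rw [h1] at h2
    have h3 : ‖b i‖ ^ 2 = lam i ^ 2 := by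
      rw [← h2, sq]; simp [RCLike.mul_re]
    exact (sq_eq_sq₀ (norm_nonneg _) (hlam0 i)).mp h3
  -- step 4 : normalized vectors and orthonormality
  set y : n → EuclideanSpace ℂ m := fun i => (((lam i)⁻¹ : ℝ) : ℂ) • b i with hy
  have hyinner : ∀ i j, (inner ℂ (y i) (y j) : ℂ)
      = (((lam i)⁻¹ : ℝ) : ℂ) * (((lam j)⁻¹ : ℝ) : ℂ) * (inner ℂ (b i) (b j) : ℂ) := by
    intro i j
    rw [hy]
    simp only [inner_smul_left, inner_smul_right, Complex.conj_ofReal]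
    ring
  have hon : Orthonormal ℂ (fun i : {i : n // lam i ≠ 0} => y i.1) := by
    rw [orthonormal_iff_ite]
    intro i j
    rcases eq_or_ne i j with rfl | hij
    · rw [if_pos rfl, hyinner, hinner, if_pos rfl]
      have h0 : lam i.1 ≠ 0 := i.2
      field_simp
      have h0' : (lam i.1 : ℂ) ≠ 0 := by exact_mod_cast h0
      push_cast
      field_simp
    · rw [if_neg hij, hyinner, hinner, if_neg (fun h => hij (Subtype.ext h)), mul_zero]
  -- step 5 : columns of V * W
  set c : n → EuclideanSpace ℂ t := fun i => WithLp.toLp 2 (fun x => (V * W) x i) with hc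
  have hbc : ∀ i, b i = (show EuclideanSpace ℂ m from WithLp.toLp 2 (U.mulVec (c i))) := by
    intro i
    ext r
    show B r i = _
    rw [hB, hA, Matrix.mul_assoc]
    simp [Matrix.mul_apply, mulVec, dotProduct, hc]
  -- step 6 : key bound
  have key : ∀ i, lam i ≤ ‖(show EuclideanSpace ℂ t from WithLp.toLp 2 (Uᴴ.mulVec (y i)))‖ * ‖c i‖ := by
    intro i
    rcases eq_or_ne (lam i) 0 with h0 | h0
    · rw [h0]; positivity
    · have h1 : (inner ℂ (y i) (b i) : ℂ) = (lam i : ℂ) := by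
        rw [hy]
        simp only [inner_smul_left, Complex.conj_ofReal, hinner i i, if_pos rfl]
        norm_cast
        field_simp
        rw [if_pos trivial, ← Complex.ofReal_mul]
        congr 1
        field_simp
      calc lam i = ‖(inner ℂ (y i) (b i) : ℂ)‖ := by
            rw [h1]
            simp [Complex.norm_real, Real.norm_eq_abs, abs_of_nonneg (hlam0 i)]
        _ = ‖(inner ℂ (show EuclideanSpace ℂ t from WithLp.toLp 2 (Uᴴ.mulVec (y i))) (c i) : ℂ)‖ := by
            rw [hbc i, euclid_inner_mulVec]
        _ ≤ _ := norm_inner_le_norm _ _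
  -- step 7 : sum bounds
  set f : n → ℝ := fun i => ‖(show EuclideanSpace ℂ t from WithLp.toLp 2 (Uᴴ.mulVec (y i)))‖ with hf
  set g : n → ℝ := fun i => ‖c i‖ with hg
  have hfg : ∑ i, lam i ≤ ∑ i, f i * g i := Finset.sum_le_sum fun i _ => key i
  have hCS : ∑ i, f i * g i ≤ Real.sqrt (∑ i, f i ^ 2) * Real.sqrt (∑ i, g i ^ 2) := by
    have h1 : (∑ i, f i * g i) ^ 2 ≤ (∑ i, f i ^ 2) * ∑ i, g i ^ 2 :=
      Finset.sum_mul_sq_le_sq_mul_sq _ _ _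
    have h2 : 0 ≤ ∑ i, f i * g i :=
      Finset.sum_nonneg fun i _ => mul_nonneg (norm_nonneg _) (norm_nonneg _)
    calc ∑ i, f i * g i = Real.sqrt ((∑ i, f i * g i) ^ 2) := (Real.sqrt_sq h2).symm
      _ ≤ Real.sqrt ((∑ i, f i ^ 2) * ∑ i, g i ^ 2) := Real.sqrt_le_sqrt h1
      _ = _ := Real.sqrt_mul (Finset.sum_nonneg fun i _ => sq_nonneg _) _
  have hWW'2 : W * Wᴴ = 1 := by rw [← Matrix.star_eq_conjTranspose]; exact hWW'
  -- Bessel bound for f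
  have hfsq : ∀ i, f i ^ 2 = ∑ x, ‖(Uᴴ.mulVec (y i)) x‖ ^ 2 := by
    intro i
    simp only [hf]
    rw [EuclideanSpace.norm_eq, Real.sq_sqrt (Finset.sum_nonneg fun _ _ => sq_nonneg _)]
  have hzero : ∀ i, lam i = 0 → f i = 0 := by
    intro i h
    have hy0 : y i = 0 := by rw [hy]; simp [h]
    have : f i ^ 2 = 0 := by
      rw [hfsq i, hy0]
      simp [Matrix.mulVec_zero]
    have := sq_eq_zero_iff.mp this
    exact this
  have hf2 : ∑ i, f i ^ 2 ≤ ∑ r, ∑ x, ‖U r x‖ ^ 2 := by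
    have e0 : ∑ i ∈ Finset.univ.filter (fun i => lam i ≠ 0), f i ^ 2 = ∑ i, f i ^ 2 :=
      Finset.sum_filter_of_ne (fun i _ hne h => hne (by rw [hzero i h]; ring))
    have e1 : ∑ i ∈ Finset.univ.filter (fun i => lam i ≠ 0), f i ^ 2
        = ∑ i : {i : n // lam i ≠ 0}, f i.1 ^ 2 :=
      Finset.sum_subtype _ (by simp) _
    rw [← e0, e1]
    have e2 : ∀ (i : {i : n // lam i ≠ 0}) (x : t),
        (Uᴴ.mulVec (y i.1)) x = inner (𝕜 := ℂ) (show EuclideanSpace ℂ m from WithLp.toLp 2 (fun r => U r x)) (y i.1) := by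
      intro i x
      simp [Matrix.mulVec, dotProduct, conjTranspose_apply, PiLp.inner_apply,
        RCLike.inner_apply]
      exact Finset.sum_congr rfl fun _ _ => mul_comm _ _
    calc ∑ i : {i : n // lam i ≠ 0}, f i.1 ^ 2
        = ∑ i : {i : n // lam i ≠ 0}, ∑ x,
            ‖(inner (𝕜 := ℂ) (y i.1) (show EuclideanSpace ℂ m from WithLp.toLp 2 (fun r => U r x)) : ℂ)‖ ^ 2 := by
          refine Finset.sum_congr rfl fun i _ => ?_
          rw [hfsq]
          refine Finset.sum_congr rfl fun x _ => ?_
          rw [e2 i x, ← norm_inner_symm]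
      _ = ∑ x, ∑ i : {i : n // lam i ≠ 0},
            ‖(inner (𝕜 := ℂ) (y i.1) (show EuclideanSpace ℂ m from WithLp.toLp 2 (fun r => U r x)) : ℂ)‖ ^ 2 :=
          Finset.sum_comm
      _ ≤ ∑ x, ‖(show EuclideanSpace ℂ m from WithLp.toLp 2 (fun r => U r x))‖ ^ 2 :=
          Finset.sum_le_sum fun x _ => hon.sum_inner_products_le _
      _ = ∑ x, ∑ r, ‖U r x‖ ^ 2 := by
          refine Finset.sum_congr rfl fun x _ => ?_
          rw [EuclideanSpace.norm_eq, Real.sq_sqrt (Finset.sum_nonneg fun _ _ => sq_nonneg _)]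
      _ = ∑ r, ∑ x, ‖U r x‖ ^ 2 := Finset.sum_comm
  -- g sum
  have hg2 : ∑ i, g i ^ 2 = ∑ r, ∑ x, ‖V r x‖ ^ 2 := by
    have e1 : ∑ i, g i ^ 2 = ∑ x, ∑ i, ‖(V * W) x i‖ ^ 2 := by
      rw [← Finset.sum_comm]
      refine Finset.sum_congr rfl fun i _ => ?_
      simp only [hg]
      rw [EuclideanSpace.norm_eq, Real.sq_sqrt (Finset.sum_nonneg fun _ _ => sq_nonneg _)]
    have e2 : ((V * W)ᴴ * (V * W)).trace = (Vᴴ * V).trace := by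
      rw [conjTranspose_mul]
      have h3 : Wᴴ * Vᴴ * (V * W) = Wᴴ * (Vᴴ * V) * W := by simp only [Matrix.mul_assoc]
      rw [h3, trace_mul_cycle, ← Matrix.mul_assoc, hWW'2, Matrix.one_mul]
    rw [e1, frobSq_eq, e2, ← frobSq_eq]
  -- combine
  rw [htrace]
  calc ∑ i, lam i ≤ ∑ i, f i * g i := hfg
    _ ≤ Real.sqrt (∑ i, f i ^ 2) * Real.sqrt (∑ i, g i ^ 2) := hCS
    _ ≤ _ := by
        apply mul_le_mul (Real.sqrt_le_sqrt hf2) (le_of_eq (by rw [hg2]))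
          (Real.sqrt_nonneg _) (Real.sqrt_nonneg _)

end core2


lemma sum_helper {I A B X : Type*} [Fintype I] [Fintype A] [Fintype B] [Fintype X]
    (f : I → ℝ) (G : I → A → X → ℝ) (H : I → B → ℝ) :
    ∑ r : A × B, ∑ ix : I × X, f ix.1 * G ix.1 r.1 ix.2 * H ix.1 r.2
      = ∑ i, f i * ((∑ x, ∑ a, G i a x) * ∑ b, H i b) := by
  rw [Finset.sum_comm, Fintype.sum_prod_type]
  refine Finset.sum_congr rfl fun i _ => ?_
  rw [Finset.sum_congr rfl fun x (_ : x ∈ Finset.univ) =>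
    Fintype.sum_prod_type (fun r : A × B => f i * G i r.1 x * H i r.2)]
  refine Eq.trans ?_ (by ring :
    (∑ x, ∑ a, G i a x) * (f i * ∑ b, H i b) = f i * ((∑ x, ∑ a, G i a x) * ∑ b, H i b))
  rw [Finset.sum_mul]
  refine Finset.sum_congr rfl fun x _ => ?_
  rw [Finset.sum_mul]
  refine Finset.sum_congr rfl fun a _ => ?_
  rw [Finset.mul_sum, Finset.mul_sum]
  exact Finset.sum_congr rfl fun b _ => by ring

lemma sum_helper2 {I A B X : Type*} [Fintype I] [Fintype A] [Fintype B] [Fintype X]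
    (f : I → ℝ) (G : I → X → A → ℝ) (H : I → B → ℝ) :
    ∑ ix : I × X, ∑ c : A × B, f ix.1 * G ix.1 ix.2 c.1 * H ix.1 c.2
      = ∑ i, f i * ((∑ x, ∑ a, G i x a) * ∑ b, H i b) := by
  rw [Fintype.sum_prod_type]
  refine Finset.sum_congr rfl fun i _ => ?_
  rw [Finset.sum_congr rfl fun x (_ : x ∈ Finset.univ) =>
    Fintype.sum_prod_type (fun c : A × B => f i * G i x c.1 * H i c.2)]
  refine Eq.trans ?_ (by ring :
    (∑ x, ∑ a, G i x a) * (f i * ∑ b, H i b) = f i * ((∑ x, ∑ a, G i x a) * ∑ b, H i b))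
  rw [Finset.sum_mul]
  refine Finset.sum_congr rfl fun x _ => ?_
  rw [Finset.sum_mul]
  refine Finset.sum_congr rfl fun a _ => ?_
  rw [Finset.mul_sum, Finset.mul_sum]
  exact Finset.sum_congr rfl fun b _ => by ring

end auxiliary

/-- Theorem 5 (full separability criterion): for a fully separable `n`-partite
state `ρ = ∑ᵢ pᵢ ρ₁ⁱ ⊗ ⋯ ⊗ ρ_nⁱ`, any `1 ≤ q ≤ n−1`, nonnegative reals
`α_q, …, α_n` and natural `l`:
`‖MR^{l,q}_{α_q,…,α_n}(ρ)‖_tr ≤ ∏_{k=q}^{n} √(l α_k² + 1)`. -/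
theorem fully_separable_MRmat_le (n l : ℕ) (dims : Fin n → ℕ) (q : Fin n)
    (hq : (q : ℕ) < n - 1) (α : Fin n → ℝ) (hα : ∀ k, 0 ≤ α k)
    {N : ℕ} (p : Fin N → ℝ)
    (σ : (i : Fin N) → (j : Fin n) → Matrix (Fin (dims j)) (Fin (dims j)) ℂ)
    (hp : ∀ i, 0 ≤ p i) (hp1 : ∑ i, p i = 1)
    (hpsd : ∀ i j, (σ i j).PosSemidef) (htr : ∀ i j, (σ i j).trace = 1)
    (hpure : ∀ i j, (σ i j * σ i j).trace = 1) :
    traceNorm (MRmat n l dims q α p σ) ≤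
      ∏ k ∈ Finset.univ.filter (fun k : Fin n => q ≤ k),
        Real.sqrt (l * α k ^ 2 + 1) := by
  classical
  set J := {j : Fin n // j < q} with hJ
  set K := {k : Fin n // q < k} with hK
  set sq : Fin N → (j : Fin n) → Matrix (Fin (dims j)) (Fin (dims j)) ℂ :=
    fun i j => psdSqrt (hpsd i j) with hsq
  -- basic entrywise sums
  have hsq1 : ∀ i (j : Fin n), ∑ a, ∑ b, ‖sq i j a b‖ ^ 2 = 1 := by
    intro i j
    rw [frobSq_eq, ((psdSqrt_posSemidef (hpsd i j)).1 : (sq i j)ᴴ = sq i j),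
      psdSqrt_mul_self (hpsd i j), htr i j]
    simp
  have hσ1 : ∀ i (j : Fin n), ∑ a, ∑ b, ‖σ i j a b‖ ^ 2 = 1 := by
    intro i j
    rw [frobSq_eq, ((hpsd i j).1 : (σ i j)ᴴ = σ i j), hpure i j]
    simp
  have haug : ∀ i (k : Fin n),
      ∑ z : Fin l ⊕ (Fin (dims k) × Fin (dims k)), ‖augVec l (α k) (σ i k) z‖ ^ 2
        = l * α k ^ 2 + 1 := by
    intro i k
    rw [Fintype.sum_sum_type]
    have h1 : ∑ _z : Fin l, ‖augVec l (α k) (σ i k) (Sum.inl _z)‖ ^ 2 = l * α k ^ 2 := by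
      simp [augVec, Complex.norm_real, Real.norm_eq_abs, sq_abs, Finset.sum_const, mul_comm]
    have h2 : ∑ ab : Fin (dims k) × Fin (dims k), ‖augVec l (α k) (σ i k) (Sum.inr ab)‖ ^ 2
        = 1 := by
      rw [Fintype.sum_prod_type]
      rw [← hσ1 i k, Finset.sum_comm]
      simp [augVec, _root_.vec]
    rw [h1, h2]
  -- the factorization
  set U : Matrix
      (((j : J) → Fin (dims j.1)) × (Fin l ⊕ (Fin (dims q) × Fin (dims q))))
      (Fin N × ((j : J) → Fin (dims j.1))) ℂ :=
    fun r ix => ((Real.sqrt (p ix.1) : ℝ) : ℂ) *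
      (∏ j : J, sq ix.1 j.1 (r.1 j) (ix.2 j)) * augVec l (α q) (σ ix.1 q) r.2 with hU
  set V : Matrix (Fin N × ((j : J) → Fin (dims j.1)))
      (((j : J) → Fin (dims j.1)) × ((k : K) → (Fin l ⊕ (Fin (dims k.1) × Fin (dims k.1))))) ℂ :=
    fun ix c => ((Real.sqrt (p ix.1) : ℝ) : ℂ) *
      (∏ j : J, sq ix.1 j.1 (ix.2 j) (c.1 j)) *
      ∏ k : K, augVec l (α k.1) (σ ix.1 k.1) (c.2 k) with hV
  have hpp : ∀ i, ((Real.sqrt (p i) : ℝ) : ℂ) * ((Real.sqrt (p i) : ℝ) : ℂ) = ((p i : ℝ) : ℂ) := by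
    intro i
    rw [← Complex.ofReal_mul, Real.mul_self_sqrt (hp i)]
  have hUV : MRmat n l dims q α p σ = U * V := by
    ext r c
    rw [Matrix.mul_apply, Fintype.sum_prod_type]
    simp only [MRmat, Matrix.of_apply]
    refine Finset.sum_congr rfl fun i _ => ?_
    have step1 : ∀ x : (j : J) → Fin (dims j.1),
        U r (i, x) * V (i, x) c
          = ((p i : ℝ) : ℂ) * (∏ j : J, sq i j.1 (r.1 j) (x j) * sq i j.1 (x j) (c.1 j)) *
              augVec l (α q) (σ i q) r.2 *
              ∏ k : K, augVec l (α k.1) (σ i k.1) (c.2 k) := by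
      intro x
      show (_ * _ * _) * (_ * _ * _) = _
      rw [← hpp i, Finset.prod_mul_distrib]
      ring
    rw [Finset.sum_congr rfl fun x _ => step1 x]
    rw [← Finset.sum_mul, ← Finset.sum_mul, ← Finset.mul_sum]
    have step2 : (∑ x : (j : J) → Fin (dims j.1),
          ∏ j : J, sq i j.1 (r.1 j) (x j) * sq i j.1 (x j) (c.1 j))
        = ∏ j : J, σ i j.1 (r.1 j) (c.1 j) := by
      rw [sum_pi_prod (fun (j : J) a => sq i j.1 (r.1 j) a * sq i j.1 a (c.1 j))]
      refine Finset.prod_congr rfl fun j _ => ?_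
      rw [← Matrix.mul_apply, hsq, psdSqrt_mul_self (hpsd i j.1)]
    rw [step2]
  -- Frobenius norms
  have hSU : ∑ r, ∑ ix, ‖U r ix‖ ^ 2 = l * α q ^ 2 + 1 := by
    have hterm : ∀ r ix, ‖U r ix‖ ^ 2
        = p ix.1 * (∏ j : J, ‖sq ix.1 j.1 (r.1 j) (ix.2 j)‖ ^ 2) *
            ‖augVec l (α q) (σ ix.1 q) r.2‖ ^ 2 := by
      intro r ix
      show ‖_ * _ * _‖ ^ 2 = _
      rw [norm_mul, norm_mul, mul_pow, mul_pow, norm_prod, ← Finset.prod_pow,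
        Complex.norm_real, Real.norm_eq_abs, sq_abs, Real.sq_sqrt (hp ix.1)]
    calc ∑ r, ∑ ix, ‖U r ix‖ ^ 2
        = ∑ r, ∑ ix, p ix.1 * (∏ j : J, ‖sq ix.1 j.1 (r.1 j) (ix.2 j)‖ ^ 2) *
            ‖augVec l (α q) (σ ix.1 q) r.2‖ ^ 2 :=
          Finset.sum_congr rfl fun r _ => Finset.sum_congr rfl fun ix _ => hterm r ix
      _ = ∑ i, p i * ((∑ x : (j : J) → Fin (dims j.1), ∑ a : (j : J) → Fin (dims j.1),
            ∏ j : J, ‖sq i j.1 (a j) (x j)‖ ^ 2) *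
            ∑ b, ‖augVec l (α q) (σ i q) b‖ ^ 2) :=
          sum_helper p
            (fun (i : Fin N) (a x : (j : J) → Fin (dims j.1)) =>
              ∏ j : J, ‖sq i j.1 (a j) (x j)‖ ^ 2)
            (fun (i : Fin N) (b : Fin l ⊕ (Fin (dims q) × Fin (dims q))) =>
              ‖augVec l (α q) (σ i q) b‖ ^ 2)
      _ = ∑ i, p i * (l * α q ^ 2 + 1) := by
          refine Finset.sum_congr rfl fun i _ => ?_
          have e1 : (∑ x : (j : J) → Fin (dims j.1), ∑ a : (j : J) → Fin (dims j.1),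
              ∏ j : J, ‖sq i j.1 (a j) (x j)‖ ^ 2) = 1 :=
            calc ∑ x : (j : J) → Fin (dims j.1), ∑ a : (j : J) → Fin (dims j.1),
                ∏ j : J, ‖sq i j.1 (a j) (x j)‖ ^ 2
                = ∑ x : (j : J) → Fin (dims j.1), ∏ j : J, ∑ cj, ‖sq i j.1 cj (x j)‖ ^ 2 :=
                  Finset.sum_congr rfl fun x _ =>
                    sum_pi_prod (fun (j : J) cj => ‖sq i j.1 cj (x j)‖ ^ 2)
              _ = ∏ j : J, ∑ bj, ∑ cj, ‖sq i j.1 cj bj‖ ^ 2 :=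
                  sum_pi_prod (fun (j : J) bj => ∑ cj, ‖sq i j.1 cj bj‖ ^ 2)
              _ = 1 := Finset.prod_eq_one fun j _ => by
                  rw [Finset.sum_comm]; exact hsq1 i j.1
          rw [e1, one_mul, haug i q]
      _ = l * α q ^ 2 + 1 := by rw [← Finset.sum_mul, hp1, one_mul]
  have hSV : ∑ ix, ∑ c, ‖V ix c‖ ^ 2 = ∏ k : K, (l * α k.1 ^ 2 + 1) := by
    have hterm : ∀ ix c, ‖V ix c‖ ^ 2
        = p ix.1 * (∏ j : J, ‖sq ix.1 j.1 (ix.2 j) (c.1 j)‖ ^ 2) *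
            ∏ k : K, ‖augVec l (α k.1) (σ ix.1 k.1) (c.2 k)‖ ^ 2 := by
      intro ix c
      show ‖_ * _ * _‖ ^ 2 = _
      rw [norm_mul, norm_mul, mul_pow, mul_pow, norm_prod, norm_prod, ← Finset.prod_pow,
        ← Finset.prod_pow, Complex.norm_real, Real.norm_eq_abs, sq_abs, Real.sq_sqrt (hp ix.1)]
    calc ∑ ix, ∑ c, ‖V ix c‖ ^ 2
        = ∑ ix, ∑ c, p ix.1 * (∏ j : J, ‖sq ix.1 j.1 (ix.2 j) (c.1 j)‖ ^ 2) *
            ∏ k : K, ‖augVec l (α k.1) (σ ix.1 k.1) (c.2 k)‖ ^ 2 :=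
          Finset.sum_congr rfl fun ix _ => Finset.sum_congr rfl fun c _ => hterm ix c
      _ = ∑ i, p i * ((∑ x : (j : J) → Fin (dims j.1), ∑ a : (j : J) → Fin (dims j.1),
            ∏ j : J, ‖sq i j.1 (x j) (a j)‖ ^ 2) *
            ∑ b : (k : K) → (Fin l ⊕ (Fin (dims k.1) × Fin (dims k.1))),
              ∏ k : K, ‖augVec l (α k.1) (σ i k.1) (b k)‖ ^ 2) :=
          sum_helper2 p
            (fun (i : Fin N) (x a : (j : J) → Fin (dims j.1)) =>
              ∏ j : J, ‖sq i j.1 (x j) (a j)‖ ^ 2)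
            (fun (i : Fin N) (b : (k : K) → (Fin l ⊕ (Fin (dims k.1) × Fin (dims k.1)))) =>
              ∏ k : K, ‖augVec l (α k.1) (σ i k.1) (b k)‖ ^ 2)
      _ = ∑ i, p i * ∏ k : K, (l * α k.1 ^ 2 + 1) := by
          refine Finset.sum_congr rfl fun i _ => ?_
          have e1 : (∑ x : (j : J) → Fin (dims j.1), ∑ a : (j : J) → Fin (dims j.1),
              ∏ j : J, ‖sq i j.1 (x j) (a j)‖ ^ 2) = 1 :=
            calc ∑ x : (j : J) → Fin (dims j.1), ∑ a : (j : J) → Fin (dims j.1),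
                ∏ j : J, ‖sq i j.1 (x j) (a j)‖ ^ 2
                = ∑ x : (j : J) → Fin (dims j.1), ∏ j : J, ∑ cj, ‖sq i j.1 (x j) cj‖ ^ 2 :=
                  Finset.sum_congr rfl fun x _ =>
                    sum_pi_prod (fun (j : J) cj => ‖sq i j.1 (x j) cj‖ ^ 2)
              _ = ∏ j : J, ∑ bj, ∑ cj, ‖sq i j.1 bj cj‖ ^ 2 :=
                  sum_pi_prod (fun (j : J) bj => ∑ cj, ‖sq i j.1 bj cj‖ ^ 2)
              _ = 1 := Finset.prod_eq_one fun j _ => hsq1 i j.1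
          have e2 : (∑ b : (k : K) → (Fin l ⊕ (Fin (dims k.1) × Fin (dims k.1))),
              ∏ k : K, ‖augVec l (α k.1) (σ i k.1) (b k)‖ ^ 2)
              = ∏ k : K, (l * α k.1 ^ 2 + 1) :=
            calc ∑ b : (k : K) → (Fin l ⊕ (Fin (dims k.1) × Fin (dims k.1))),
                ∏ k : K, ‖augVec l (α k.1) (σ i k.1) (b k)‖ ^ 2
                = ∏ k : K, ∑ z, ‖augVec l (α k.1) (σ i k.1) z‖ ^ 2 :=
                  sum_pi_prod (fun (k : K) z => ‖augVec l (α k.1) (σ i k.1) z‖ ^ 2)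
              _ = ∏ k : K, (l * α k.1 ^ 2 + 1) :=
                  Finset.prod_congr rfl fun k _ => haug i k.1
          rw [e1, one_mul, e2]
      _ = ∏ k : K, (l * α k.1 ^ 2 + 1) := by rw [← Finset.sum_mul, hp1, one_mul]
  -- conclude
  have hmain := traceNorm_mul_le U V
  rw [← hUV, hSU, hSV] at hmain
  refine hmain.trans (le_of_eq ?_)
  have hnn : ∀ k : Fin n, (0 : ℝ) ≤ l * α k ^ 2 + 1 := by
    intro k; positivity
  have hsplit : Finset.univ.filter (fun k : Fin n => q ≤ k)
      = insert q (Finset.univ.filter (fun k : Fin n => q < k)) := by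
    ext k
    simp only [Finset.mem_filter, Finset.mem_univ, true_and, Finset.mem_insert]
    constructor
    · intro h
      rcases eq_or_lt_of_le h with h' | h'
      · exact Or.inl h'.symm
      · exact Or.inr h'
    · rintro (rfl | h)
      · exact le_refl _
      · exact le_of_lt h
  have hprod_sqrt : ∀ (s : Finset (Fin n)),
      Real.sqrt (∏ k ∈ s, (l * α k ^ 2 + 1)) = ∏ k ∈ s, Real.sqrt (l * α k ^ 2 + 1) := by
    intro s
    induction s using Finset.induction_on with
    | empty => simp
    | insert _ _ hnotmem ih =>
      rw [Finset.prod_insert hnotmem, Finset.prod_insert hnotmem,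
        Real.sqrt_mul (hnn _), ih]
  have hKprod : ∏ k : K, (l * α k.1 ^ 2 + 1)
      = ∏ k ∈ Finset.univ.filter (fun k : Fin n => q < k), (l * α k ^ 2 + 1) := by
    exact (Finset.prod_subtype (p := fun k : Fin n => q < k)
      (Finset.univ.filter (fun k : Fin n => q < k))
      (fun k => by simp) (fun k => l * α k ^ 2 + 1)).symm
  rw [hKprod, hprod_sqrt, hsplit, Finset.prod_insert (by simp)]
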